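/- Let 0 < p₀ < p₁ < ∞, let (Ω, μ) be a measure space, let (F_j)_{j∈ℤ} be measurable functions on Ω, let (s_j) be nonnegative reals, and let M > 0. Assume that for every j ∈ ℤ and for ν ∈ {0,1} one has ‖F_j‖_{p_ν}^{p_ν} ≤ 2^{j p_ν} M^{p_ν} s_j. Then for every p with p₀ < p < p₁ there is a constant C = C(p₀, p₁, p), independent of the F_j, s_j and M, such that ‖Σ_j F_j‖_p^p ≤ C^p M^p Σ_j 2^{jp} s_j. -/

import Mathlib

open MeasureTheory ENNReal
open scoped ENNReal NNReal Classical

namespace DyadicInterp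


lemma two_rpow_ne_top (y : ℝ) : (2:ℝ≥0∞)^y ≠ ⊤ := by
  rcases le_or_gt 0 y with h | h
  · exact ENNReal.rpow_ne_top_of_nonneg h (by norm_num)
  · exact ne_top_of_le_ne_top one_ne_top
      ((ENNReal.rpow_le_one_of_one_le_of_neg (by norm_num) h))

lemma two_rpow_ne_zero (y : ℝ) : (2:ℝ≥0∞)^y ≠ 0 := by
  intro h
  rcases ENNReal.rpow_eq_zero_iff.1 h with ⟨h1,_⟩ | ⟨h1,_⟩ <;> norm_num at h1

lemma two_rpow_pos (y : ℝ) : 0 < (2:ℝ≥0∞)^y :=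
  pos_iff_ne_zero.2 (two_rpow_ne_zero y)

lemma two_rpow_add (x y : ℝ) : (2:ℝ≥0∞)^(x+y) = 2^x * 2^y :=
  ENNReal.rpow_add x y (by norm_num) (by norm_num)

-- geometric sum over ℕ
lemma geom_nat (δ : ℝ) : ∑' n : ℕ, (2:ℝ≥0∞)^(-δ * (n:ℝ)) = (1 - 2^(-δ))⁻¹ := by
  rw [← ENNReal.tsum_geometric]
  congr 1; ext n
  rw [← ENNReal.rpow_natCast ((2:ℝ≥0∞)^(-δ)) n, ← ENNReal.rpow_mul]

lemma geom_ne_top {δ : ℝ} (hδ : 0 < δ) : ((1:ℝ≥0∞) - 2^(-δ))⁻¹ ≠ ⊤ := by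
  rw [ENNReal.inv_ne_top]
  simp only [ne_eq, tsub_eq_zero_iff_le, not_le]
  exact ENNReal.rpow_lt_one_of_one_lt_of_neg (by norm_num) (by linarith)

-- general geometric domination lemma
lemma geom_le {δ : ℝ} (hδ : 0 < δ) (c : ℤ → Prop) (g : ℤ → ℝ≥0∞) (ι : ℤ → ℕ)
    (hι : ∀ i j, c i → c j → ι i = ι j → i = j)
    (hg : ∀ i, c i → g i ≤ (2:ℝ≥0∞)^(-δ * (ι i : ℝ))) :
    ∑' i : ℤ, (if c i then g i else 0) ≤ (1 - 2^(-δ))⁻¹ := by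
  rw [← geom_nat δ]
  have h1 : ∀ i : ℤ, (if c i then g i else 0) = {i : ℤ | c i}.indicator g i := by
    intro i; simp [Set.indicator_apply]
  calc ∑' i : ℤ, (if c i then g i else 0) = ∑' i : ℤ, {i : ℤ | c i}.indicator g i := by
        exact tsum_congr h1
    _ = ∑' i : {i : ℤ | c i}, g i := (tsum_subtype _ g).symm
    _ ≤ ∑' n : ℕ, (2:ℝ≥0∞)^(-δ * (n:ℝ)) := by
        refine Summable.tsum_le_tsum_of_inj (fun i => ι i.1) ?_ (fun _ _ => zero_le) ?_
          ENNReal.summable ENNReal.summable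
        · intro i j hij
          exact Subtype.ext (hι i.1 j.1 i.2 j.2 hij)
        · intro b; exact hg b.1 b.2



lemma tsum_rpow_le {q : ℝ} (hq : 0 < q) (hq1 : q ≤ 1) (f : ℤ → ℝ≥0∞) :
    (∑' j, f j) ^ q ≤ ∑' j, (f j) ^ q := by
  have hfin : ∀ s : Finset ℤ, (∑ j ∈ s, f j) ^ q ≤ ∑' j, (f j) ^ q := by
    intro s
    refine le_trans ?_ (ENNReal.sum_le_tsum s)
    induction s using Finset.cons_induction with
    | empty => simp [ENNReal.zero_rpow_of_pos hq]
    | cons a s ha ih =>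
      rw [Finset.sum_cons, Finset.sum_cons]
      exact le_trans (ENNReal.rpow_add_le_add_rpow _ _ hq.le hq1) (add_le_add le_rfl ih)
  rw [ENNReal.tsum_eq_iSup_sum]
  have : (⨆ s : Finset ℤ, ∑ j ∈ s, f j) ≤ (∑' j, (f j) ^ q) ^ (1/q) := by
    refine iSup_le fun s => ?_
    rw [← ENNReal.rpow_le_rpow_iff hq, ← ENNReal.rpow_mul, one_div,
      inv_mul_cancel₀ hq.ne', ENNReal.rpow_one]
    exact hfin s
  calc (⨆ s : Finset ℤ, ∑ j ∈ s, f j) ^ q ≤ ((∑' j, (f j) ^ q) ^ (1/q)) ^ q :=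
        ENNReal.rpow_le_rpow this hq.le
    _ = ∑' j, (f j) ^ q := by
        rw [← ENNReal.rpow_mul, one_div, inv_mul_cancel₀ hq.ne', ENNReal.rpow_one]

lemma key_sum {q : ℝ} (hq : 0 < q) (f w : ℤ → ℝ≥0∞)
    (hw : ∀ j, f j ≠ 0 → w j ≠ 0 ∧ w j ≤ 1) :
    (∑' j, f j) ^ q ≤ (1 + ∑' j, w j) ^ q * ∑' j, (w j) ^ (-|q-1|) * (f j) ^ q := by
  have hone : (1:ℝ≥0∞) ≤ (1 + ∑' j, w j) ^ q :=
    ENNReal.one_le_rpow (le_add_right le_rfl) hq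
  rcases le_or_gt q 1 with hq1 | hq1
  · -- subadditive case
    have h1 : (∑' j, f j) ^ q ≤ ∑' j, (f j) ^ q := tsum_rpow_le hq hq1 f
    have h2 : ∀ j, (f j) ^ q ≤ (w j) ^ (-|q-1|) * (f j) ^ q := by
      intro j
      rcases eq_or_ne (f j) 0 with h | h
      · simp [h, ENNReal.zero_rpow_of_pos hq]
      · have hwj := hw j h
        have hle : (1:ℝ≥0∞) ≤ (w j) ^ (-|q-1|) := by
          rcases eq_or_lt_of_le hq1 with rfl | hlt
          · simp
          · exact ENNReal.one_le_rpow_of_pos_of_le_one_of_neg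
              (pos_iff_ne_zero.2 hwj.1) hwj.2
              (by rw [neg_lt, neg_zero]; exact abs_pos.2 (by linarith))
        calc (f j)^q = 1 * (f j)^q := (one_mul _).symm
          _ ≤ (w j) ^ (-|q-1|) * (f j) ^ q := mul_le_mul_left hle _
    refine le_trans h1 (le_trans (ENNReal.tsum_le_tsum h2) ?_)
    exact le_mul_of_one_le_left zero_le hone
  · -- Hölder case
    have habs : |q - 1| = q - 1 := abs_of_pos (by linarith)
    have hpq : (Real.conjExponent q).HolderConjugate q :=
      (Real.HolderConjugate.conjExponent hq1).symm
    set q' : ℝ := Real.conjExponent q with hq'def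
    have hq'pos : 0 < q' := hpq.pos
    have hdiv : (1/q') * q' = 1 := by field_simp
    have hqq' : -(1/q') * q = -|q-1| := by
      rw [habs, hq'def, Real.conjExponent]
      field_simp
    set g : ℤ → ℝ≥0∞ := fun j => (w j) ^ (-(1/q')) * f j with hgdef
    have h1 : ∀ j, f j ≤ (w j) ^ (1/q') * g j := by
      intro j
      rcases eq_or_ne (f j) 0 with h | h
      · simp [h, hgdef]
      · have hwj := hw j h
        have hwt : w j ≠ ⊤ := ne_top_of_le_ne_top one_ne_top hwj.2
        rw [hgdef, ← mul_assoc, ← ENNReal.rpow_add _ _ hwj.1 hwt]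
        simp
    have h2 : ∑' j, f j ≤ (∑' j, w j) ^ (1/q') * (∑' j, (w j)^(-|q-1|) * (f j)^q) ^ (1/q) := by
      calc ∑' j, f j ≤ ∑' j, (w j) ^ (1/q') * g j := ENNReal.tsum_le_tsum h1
        _ = ∫⁻ j, (fun j => (w j) ^ (1/q')) j * g j ∂(Measure.count) := by
            rw [lintegral_count]
        _ ≤ (∫⁻ j, ((w j) ^ (1/q'))^q' ∂(Measure.count)) ^ (1/q') *
            (∫⁻ j, (g j)^q ∂(Measure.count)) ^ (1/q) :=
          ENNReal.lintegral_mul_le_Lp_mul_Lq _ hpq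
            ((measurable_of_countable _).aemeasurable)
            ((measurable_of_countable _).aemeasurable)
        _ = (∑' j, w j) ^ (1/q') * (∑' j, (w j)^(-|q-1|) * (f j)^q) ^ (1/q) := by
            have e1 : ∀ j : ℤ, ((w j)^(1/q'))^q' = w j := fun j => by
              rw [← ENNReal.rpow_mul, hdiv, ENNReal.rpow_one]
            have e2 : ∀ j : ℤ, (g j)^q = (w j)^(-|q-1|) * (f j)^q := fun j => by
              rw [hgdef]
              rw [ENNReal.mul_rpow_of_nonneg _ _ hq.le, ← ENNReal.rpow_mul, hqq']
            rw [lintegral_count, lintegral_count, tsum_congr e1, tsum_congr e2]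
    calc (∑' j, f j) ^ q
        ≤ ((∑' j, w j) ^ (1/q') * (∑' j, (w j)^(-|q-1|) * (f j)^q) ^ (1/q)) ^ q :=
          ENNReal.rpow_le_rpow h2 hq.le
      _ = ((∑' j, w j) ^ ((1/q')*q)) * (∑' j, (w j)^(-|q-1|) * (f j)^q) := by
          rw [ENNReal.mul_rpow_of_nonneg _ _ hq.le, ← ENNReal.rpow_mul,
            ← ENNReal.rpow_mul, one_div q, inv_mul_cancel₀ hq.ne', ENNReal.rpow_one]
      _ ≤ (1 + ∑' j, w j) ^ q * (∑' j, (w j)^(-|q-1|) * (f j)^q) := by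
          refine mul_le_mul_left ?_ _
          calc (∑' j, w j) ^ ((1/q')*q) ≤ (1 + ∑' j, w j) ^ ((1/q')*q) :=
                ENNReal.rpow_le_rpow (le_add_left le_rfl) (by positivity)
            _ ≤ (1 + ∑' j, w j) ^ q := by
                refine ENNReal.rpow_le_rpow_of_exponent_le (le_add_right le_rfl) ?_
                have h := hpq.symm.lt
                nlinarith [hq'pos, hpq.inv_add_inv_eq_one]
  


lemma chebyshev {Ω : Type} [MeasurableSpace Ω] {μ : Measure Ω} {h : Ω → ℝ≥0∞}
    (hh : AEMeasurable h μ) {c : ℝ≥0∞} (hc0 : c ≠ 0) (hct : c ≠ ⊤) {q : ℝ} (hq : 0 < q) :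
    μ {x | c < h x} ≤ c ^ (-q) * ∫⁻ x, (h x) ^ q ∂μ := by
  have hsub : {x | c < h x} ⊆ {x | c ^ q ≤ (h x) ^ q} :=
    fun x hx => ENNReal.rpow_le_rpow (le_of_lt hx) hq.le
  have hcq0 : c ^ q ≠ 0 := (ENNReal.rpow_pos (pos_iff_ne_zero.2 hc0) hct).ne'
  have hcqt : c ^ q ≠ ⊤ := ENNReal.rpow_ne_top_of_nonneg hq.le hct
  have hcheb := mul_meas_ge_le_lintegral₀ (hh.pow_const q) (c ^ q)
  calc μ {x | c < h x} ≤ μ {x | c ^ q ≤ (h x) ^ q} := measure_mono hsub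
    _ = c ^ (-q) * (c ^ q * μ {x | c ^ q ≤ (h x) ^ q}) := by
        rw [← mul_assoc, ENNReal.rpow_neg, ENNReal.inv_mul_cancel hcq0 hcqt, one_mul]
    _ ≤ c ^ (-q) * ∫⁻ x, (h x) ^ q ∂μ := mul_le_mul_right hcheb _


lemma pointwise_dyadic {m : ℝ≥0∞} (hm0 : m ≠ 0) (hmt : m ≠ ⊤) {p : ℝ} (hp : 0 < p)
    (g : ℝ≥0∞) :
    g ^ p ≤ ∑' k : ℤ, if (2:ℝ≥0∞)^(k:ℝ) * m < g
      then (2:ℝ≥0∞)^(((k:ℝ)+2)*p) * m^p else 0 := by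
  rcases eq_or_ne g 0 with rfl | hg0
  · simp [ENNReal.zero_rpow_of_pos hp]
  rcases eq_or_ne g ⊤ with rfl | hgt
  · -- RHS is ⊤
    have hmp0 : m ^ p ≠ 0 := (ENNReal.rpow_pos (pos_iff_ne_zero.2 hm0) hmt).ne'
    have hmpt : m ^ p ≠ ⊤ := ENNReal.rpow_ne_top_of_nonneg hp.le hmt
    have hcond : ∀ k : ℤ, (2:ℝ≥0∞)^(k:ℝ) * m < ⊤ :=
      fun k => ENNReal.mul_lt_top (lt_top_iff_ne_top.2 (two_rpow_ne_top _))
        (lt_top_iff_ne_top.2 hmt)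
    rw [tsum_congr (fun k : ℤ => if_pos (hcond k))]
    refine le_top.trans (le_of_eq ?_)
    by_contra hne
    have hS : (∑' k : ℤ, (2:ℝ≥0∞)^(((k:ℝ)+2)*p) * m^p) ≠ ⊤ := fun h => hne h.symm
    set S := ∑' k : ℤ, (2:ℝ≥0∞)^(((k:ℝ)+2)*p) * m^p with hSdef
    have hdiv : S / m^p < ⊤ := ENNReal.div_lt_top hS hmp0
    obtain ⟨n, hn⟩ := ENNReal.exists_nat_gt hdiv.ne
    set k : ℤ := ⌈(n:ℝ)/p⌉ with hkdef
    have hexp : (n:ℝ) ≤ ((k:ℝ)+2)*p := by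
      have h1 : (n:ℝ)/p ≤ (k:ℝ) := Int.le_ceil _
      have h2 : (n:ℝ)/p * p = n := by field_simp
      nlinarith [hp.le]
    have hterm : (n:ℝ≥0∞) ≤ (2:ℝ≥0∞)^(((k:ℝ)+2)*p) := by
      calc (n:ℝ≥0∞) ≤ 2^n := by
            exact_mod_cast le_of_lt (Nat.lt_two_pow_self)
        _ = (2:ℝ≥0∞)^(n:ℝ) := by
            rw [ENNReal.rpow_natCast]
        _ ≤ (2:ℝ≥0∞)^(((k:ℝ)+2)*p) :=
            ENNReal.rpow_le_rpow_of_exponent_le (by norm_num) hexp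
    have hlt : S < (n:ℝ≥0∞) * m^p := by
      have := ENNReal.mul_lt_mul_left hmp0 hmpt hn
      rwa [ENNReal.div_mul_cancel hmp0 hmpt] at this
    have hge : (n:ℝ≥0∞) * m^p ≤ S :=
      le_trans (mul_le_mul_left hterm _) (ENNReal.le_tsum k)
    exact absurd (hlt.trans_le hge) (lt_irrefl _)
  · -- main case : 0 < g < ⊤
    have hgm0 : g / m ≠ 0 := (ENNReal.div_pos hg0 hmt).ne'
    have hgmt : g / m ≠ ⊤ := (ENNReal.div_lt_top hgt hm0).ne
    set r : ℝ≥0 := (g / m).toNNReal with hrdef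
    have hr0 : 0 < r := ENNReal.toNNReal_pos hgm0 hgmt
    have hrg : ((r : ℝ≥0) : ℝ≥0∞) = g / m := ENNReal.coe_toNNReal hgmt
    set L : ℤ := Int.log 2 r with hLdef
    set k : ℤ := L - 1 with hkdef
    have h1 : (2:ℝ≥0)^L ≤ r := Int.zpow_log_le_self (by norm_num) hr0
    have h2 : r < (2:ℝ≥0)^(L+1) := Int.lt_zpow_succ_log_self (by norm_num) r
    -- transfer to ℝ≥0∞
    have hzpow : ∀ i : ℤ, (2:ℝ≥0∞)^(i:ℝ) = (((2:ℝ≥0)^i : ℝ≥0) : ℝ≥0∞) := by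
      intro i
      rw [ENNReal.rpow_intCast, ENNReal.coe_zpow (show (2:ℝ≥0) ≠ 0 by norm_num)]
      norm_num
    have hcond : (2:ℝ≥0∞)^(k:ℝ) * m < g := by
      have hlt : (2:ℝ≥0∞)^(k:ℝ) < g / m := by
        have hkL : (2:ℝ≥0)^k < (2:ℝ≥0)^L :=
          zpow_lt_zpow_right₀ (by norm_num) (by rw [hkdef]; omega)
        rw [hzpow k, ← hrg]
        exact ENNReal.coe_lt_coe.2 (lt_of_lt_of_le hkL h1)
      have := ENNReal.mul_lt_mul_left hm0 hmt hlt
      rwa [ENNReal.div_mul_cancel hm0 hmt] at this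
    have hbound : g ≤ (2:ℝ≥0∞)^((k:ℝ)+2) * m := by
      have hle : g / m ≤ (2:ℝ≥0∞)^((k:ℝ)+2) := by
        have : ((k:ℝ)+2) = ((L+1 : ℤ) : ℝ) := by rw [hkdef]; push_cast; ring
        rw [this, hzpow (L+1), ← hrg]
        exact ENNReal.coe_le_coe.2 h2.le
      calc g = g / m * m := (ENNReal.div_mul_cancel hm0 hmt).symm
        _ ≤ (2:ℝ≥0∞)^((k:ℝ)+2) * m := mul_le_mul_left hle _
    calc g ^ p ≤ ((2:ℝ≥0∞)^((k:ℝ)+2) * m) ^ p := ENNReal.rpow_le_rpow hbound hp.le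
      _ = (2:ℝ≥0∞)^(((k:ℝ)+2)*p) * m^p := by
          rw [ENNReal.mul_rpow_of_nonneg _ _ hp.le, ← ENNReal.rpow_mul]
      _ = (if (2:ℝ≥0∞)^(k:ℝ) * m < g then (2:ℝ≥0∞)^(((k:ℝ)+2)*p) * m^p else 0) := by
          rw [if_pos hcond]
      _ ≤ _ := ENNReal.le_tsum k




lemma side {Ω : Type} [MeasurableSpace Ω] (μ : Measure Ω) {q : ℝ} (hq : 0 < q)
    (c : ℤ → Prop) (w : ℤ → ℝ≥0∞)
    (hw : ∀ j, c j → w j ≠ 0 ∧ w j ≤ 1)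
    (a : ℤ → Ω → ℝ≥0∞) (ha : ∀ j, Measurable (a j)) :
    ∫⁻ x, (∑' j, if c j then a j x else 0) ^ q ∂μ ≤
      (1 + ∑' j, (if c j then w j else 0)) ^ q *
        ∑' j, (if c j then (w j) ^ (-|q-1|) * ∫⁻ x, (a j x)^q ∂μ else 0) := by
  set w' : ℤ → ℝ≥0∞ := fun j => if c j then w j else 0 with hw'def
  set f : ℤ → Ω → ℝ≥0∞ := fun j x => if c j then a j x else 0 with hfdef
  have hfm : ∀ j, Measurable (f j) := by
    intro j
    by_cases hc : c j <;> simp [hfdef, hc, ha j, measurable_const]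
  have hpt : ∀ x, (∑' j, f j x)^q ≤
      (1 + ∑' j, w' j) ^ q * ∑' j, (w' j) ^ (-|q-1|) * (f j x) ^ q := by
    intro x
    refine key_sum hq _ _ ?_
    intro j hfj
    have hc : c j := by
      by_contra hc; simp [hfdef, hc] at hfj
    simp only [hw'def, if_pos hc]
    exact hw j hc
  have hinner : ∀ j, Measurable (fun x => (w' j) ^ (-|q-1|) * (f j x) ^ q) :=
    fun j => (((hfm j).pow_const q).const_mul _)
  calc ∫⁻ x, (∑' j, f j x) ^ q ∂μ
      ≤ ∫⁻ x, (1 + ∑' j, w' j) ^ q * ∑' j, (w' j) ^ (-|q-1|) * (f j x) ^ q ∂μ :=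
        lintegral_mono hpt
    _ = (1 + ∑' j, w' j) ^ q * ∫⁻ x, ∑' j, (w' j) ^ (-|q-1|) * (f j x) ^ q ∂μ :=
        lintegral_const_mul _ (Measurable.ennreal_tsum hinner)
    _ = (1 + ∑' j, w' j) ^ q * ∑' j, ∫⁻ x, (w' j) ^ (-|q-1|) * (f j x) ^ q ∂μ := by
        rw [lintegral_tsum (fun j => (hinner j).aemeasurable)]
    _ = (1 + ∑' j, w' j) ^ q *
        ∑' j, (if c j then (w j) ^ (-|q-1|) * ∫⁻ x, (a j x)^q ∂μ else 0) := by
        congr 1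
        refine tsum_congr fun j => ?_
        by_cases hc : c j
        · rw [if_pos hc]
          rw [lintegral_const_mul _ ((hfm j).pow_const q)]
          simp [hw'def, hfdef, hc]
        · rw [if_neg hc]
          have : ∀ x : Ω, (w' j) ^ (-|q-1|) * (f j x) ^ q = 0 := by
            intro x
            simp [hfdef, hc, ENNReal.zero_rpow_of_pos hq]
          simp [this]




lemma collapse6 {m : ℝ≥0∞} (hm0 : m ≠ 0) (hmt : m ≠ ⊤) (Z : ℝ≥0∞)
    (a1 a2 a3 a4 c1 c2 c3 b1 b2 b3 d : ℝ)
    (h2 : a1 + a2 + a3 + a4 = c1 + c2 + c3) (hm : b1 + b2 + b3 = d) :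
    (2:ℝ≥0∞)^a1 * m^b1 * ((2:ℝ≥0∞)^a2 * m^b2) * ((2:ℝ≥0∞)^a3 * ((2:ℝ≥0∞)^a4 * m^b3 * Z))
      = (2:ℝ≥0∞)^c1 * m^d * ((2:ℝ≥0∞)^c2 * ((2:ℝ≥0∞)^c3 * Z)) := by
  have em : ∀ x y : ℝ, m^(x+y) = m^x * m^y := fun x y => ENNReal.rpow_add x y hm0 hmt
  have hL : (2:ℝ≥0∞)^a1 * m^b1 * ((2:ℝ≥0∞)^a2 * m^b2) *
      ((2:ℝ≥0∞)^a3 * ((2:ℝ≥0∞)^a4 * m^b3 * Z))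
      = (2:ℝ≥0∞)^(a1+a2+a3+a4) * m^(b1+b2+b3) * Z := by
    rw [two_rpow_add (a1+a2+a3) a4, two_rpow_add (a1+a2) a3, two_rpow_add a1 a2,
      em (b1+b2) b3, em b1 b2]
    ring
  have hR : (2:ℝ≥0∞)^c1 * m^d * ((2:ℝ≥0∞)^c2 * ((2:ℝ≥0∞)^c3 * Z))
      = (2:ℝ≥0∞)^(c1+c2+c3) * m^d * Z := by
    rw [two_rpow_add (c1+c2) c3, two_rpow_add c1 c2]
    ring
  rw [hL, hR, h2, hm]

lemma lintegral_ite_lt {Ω : Type} [MeasurableSpace Ω] (μ : Measure Ω)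
    {g : Ω → ℝ≥0∞} (hg : Measurable g) (τ c : ℝ≥0∞) :
    ∫⁻ x, (if τ < g x then c else 0) ∂μ = c * μ {x | τ < g x} := by
  have hs : MeasurableSet {x | τ < g x} := measurableSet_lt measurable_const hg
  rw [← lintegral_indicator_const hs c]
  refine lintegral_congr fun x => ?_
  rw [Set.indicator_apply]
  by_cases h : τ < g x
  · rw [if_pos h, if_pos]; exact h
  · rw [if_neg h, if_neg]; exact h




lemma half {Ω : Type} [MeasurableSpace Ω] (μ : Measure Ω) {p q ε δ : ℝ}
    (hp : 0 < p) (hq : 0 < q) (hε : 0 < ε) (hδ : 0 < δ)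
    (cond : ℤ → ℤ → Prop)
    (u : ℤ → ℤ → ℝ)
    (hu : ∀ k j, cond k j → u k j ≤ 0)
    (ι1 : ℤ → ℤ → ℕ)
    (hι1 : ∀ k i j, cond k i → cond k j → ι1 k i = ι1 k j → i = j)
    (hι1g : ∀ k j, cond k j → u k j ≤ -ε * (ι1 k j : ℝ))
    (ι2 : ℤ → ℤ → ℕ)
    (hι2 : ∀ j k k', cond k j → cond k' j → ι2 j k = ι2 j k' → k = k')
    (hexp : ∀ k j, cond k j → ((k:ℝ)+2)*p + ((k:ℝ)-1)*(-q) + (u k j)*(-|q-1|) + (j:ℝ)*q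
        = (2*p+q) + (-δ*(ι2 j k : ℝ)) + ((j:ℝ)*p))
    (m : ℝ≥0∞) (hm0 : m ≠ 0) (hmt : m ≠ ⊤)
    (a : ℤ → Ω → ℝ≥0∞) (ha : ∀ j, Measurable (a j))
    (σ : ℤ → ℝ≥0∞)
    (hyp : ∀ j : ℤ, ∫⁻ x, (a j x) ^ q ∂μ ≤ 2^((j:ℝ)*q) * m^q * σ j) :
    ∑' k : ℤ, (2:ℝ≥0∞)^(((k:ℝ)+2)*p) * m^p *
        μ {x | (2:ℝ≥0∞)^((k:ℝ)-1) * m < ∑' j, (if cond k j then a j x else 0)} ≤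
      (2^(2*p+q) * (1 + (1 - 2^(-ε))⁻¹)^q * (1-2^(-δ))⁻¹) *
        (m^p * ∑' j : ℤ, 2^((j:ℝ)*p) * σ j) := by
  set Y : ℝ≥0∞ := (1 + (1 - 2^(-ε))⁻¹)^q with hYdef
  set B : ℤ → ℝ≥0∞ := fun j => 2^((j:ℝ)*p) * σ j with hBdef
  set T : ℤ → ℝ≥0∞ := fun k => ∑' j : ℤ,
    (if cond k j then (2:ℝ≥0∞)^(-δ*(ι2 j k : ℝ)) * B j else 0) with hTdef
  have hk : ∀ k : ℤ, (2:ℝ≥0∞)^(((k:ℝ)+2)*p) * m^p *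
      μ {x | (2:ℝ≥0∞)^((k:ℝ)-1) * m < ∑' j, (if cond k j then a j x else 0)} ≤
      Y * ((2:ℝ≥0∞)^(2*p+q) * m^p * T k) := by
    intro k
    have hPm : Measurable (fun x => ∑' j, (if cond k j then a j x else 0)) := by
      refine Measurable.ennreal_tsum (fun j => ?_)
      by_cases hc : cond k j
      · simpa [hc] using ha j
      · simp [hc]
    have hτ0 : (2:ℝ≥0∞)^((k:ℝ)-1) * m ≠ 0 := mul_ne_zero (two_rpow_ne_zero _) hm0
    have hτt : (2:ℝ≥0∞)^((k:ℝ)-1) * m ≠ ⊤ := ENNReal.mul_ne_top (two_rpow_ne_top _) hmt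
    have hcheb := chebyshev (μ := μ) hPm.aemeasurable hτ0 hτt hq
    have hτrw : ((2:ℝ≥0∞)^((k:ℝ)-1) * m)^(-q) = (2:ℝ≥0∞)^(((k:ℝ)-1)*(-q)) * m^(-q) := by
      rw [ENNReal.mul_rpow_of_ne_top (two_rpow_ne_top _) hmt, ← ENNReal.rpow_mul]
    have hw : ∀ j, cond k j → (2:ℝ≥0∞)^(u k j) ≠ 0 ∧ (2:ℝ≥0∞)^(u k j) ≤ 1 := by
      intro j hc
      refine ⟨two_rpow_ne_zero _, ?_⟩
      calc (2:ℝ≥0∞)^(u k j) ≤ (2:ℝ≥0∞)^(0:ℝ) :=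
            ENNReal.rpow_le_rpow_of_exponent_le (by norm_num) (hu k j hc)
        _ = 1 := ENNReal.rpow_zero
    have hside := side μ hq (cond k) (fun j => (2:ℝ≥0∞)^(u k j)) hw a ha
    have hWk : (∑' j : ℤ, (if cond k j then (2:ℝ≥0∞)^(u k j) else 0)) ≤ (1-2^(-ε))⁻¹ := by
      refine geom_le hε (cond k) _ (ι1 k) (hι1 k) (fun j hc => ?_)
      exact ENNReal.rpow_le_rpow_of_exponent_le (by norm_num) (hι1g k j hc)
    have hYk : (1 + ∑' j : ℤ, (if cond k j then (2:ℝ≥0∞)^(u k j) else 0))^q ≤ Y :=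
      ENNReal.rpow_le_rpow (add_le_add_right hWk 1) hq.le
    have hSig : (∑' j : ℤ, (if cond k j then
          ((2:ℝ≥0∞)^(u k j)) ^ (-|q-1|) * ∫⁻ x, (a j x)^q ∂μ else 0)) ≤
        ∑' j : ℤ, (if cond k j then
          ((2:ℝ≥0∞)^(u k j)) ^ (-|q-1|) * (2^((j:ℝ)*q) * m^q * σ j) else 0) := by
      refine ENNReal.tsum_le_tsum (fun j => ?_)
      by_cases hc : cond k j
      · rw [if_pos hc, if_pos hc]
        exact mul_le_mul_right (hyp j) _
      · rw [if_neg hc]; exact zero_le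
    have hcollapse : ∀ j : ℤ,
        ((2:ℝ≥0∞)^(((k:ℝ)+2)*p) * m^p * ((2:ℝ≥0∞)^(((k:ℝ)-1)*(-q)) * m^(-q))) *
          (if cond k j then ((2:ℝ≥0∞)^(u k j)) ^ (-|q-1|) *
            (2^((j:ℝ)*q) * m^q * σ j) else 0)
        = (2:ℝ≥0∞)^(2*p+q) * m^p *
          (if cond k j then (2:ℝ≥0∞)^(-δ*(ι2 j k : ℝ)) * B j else 0) := by
      intro j
      by_cases hc : cond k j
      · rw [if_pos hc, if_pos hc, ← ENNReal.rpow_mul]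
        exact collapse6 hm0 hmt (σ j) (((k:ℝ)+2)*p) (((k:ℝ)-1)*(-q)) ((u k j)*(-|q-1|))
          ((j:ℝ)*q) (2*p+q) (-δ*(ι2 j k : ℝ)) ((j:ℝ)*p) p (-q) q p (hexp k j hc) (by ring)
      · rw [if_neg hc, if_neg hc, mul_zero, mul_zero]
    calc (2:ℝ≥0∞)^(((k:ℝ)+2)*p) * m^p *
        μ {x | (2:ℝ≥0∞)^((k:ℝ)-1) * m < ∑' j, (if cond k j then a j x else 0)}
        ≤ (2:ℝ≥0∞)^(((k:ℝ)+2)*p) * m^p * (((2:ℝ≥0∞)^((k:ℝ)-1) * m)^(-q) *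
            ∫⁻ x, (∑' j, (if cond k j then a j x else 0))^q ∂μ) :=
          mul_le_mul_right hcheb _
      _ ≤ (2:ℝ≥0∞)^(((k:ℝ)+2)*p) * m^p * (((2:ℝ≥0∞)^((k:ℝ)-1) * m)^(-q) *
            ((1 + ∑' j : ℤ, (if cond k j then (2:ℝ≥0∞)^(u k j) else 0))^q *
              ∑' j : ℤ, (if cond k j then
                ((2:ℝ≥0∞)^(u k j)) ^ (-|q-1|) * ∫⁻ x, (a j x)^q ∂μ else 0))) :=
          mul_le_mul_right (mul_le_mul_right hside _) _
      _ ≤ (2:ℝ≥0∞)^(((k:ℝ)+2)*p) * m^p * (((2:ℝ≥0∞)^((k:ℝ)-1) * m)^(-q) *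
            (Y * ∑' j : ℤ, (if cond k j then
              ((2:ℝ≥0∞)^(u k j)) ^ (-|q-1|) * (2^((j:ℝ)*q) * m^q * σ j) else 0))) :=
          mul_le_mul_right (mul_le_mul_right (mul_le_mul' hYk hSig) _) _
      _ = Y * ((2:ℝ≥0∞)^(2*p+q) * m^p * T k) := by
          rw [hτrw]
          have hshuffle : (2:ℝ≥0∞)^(((k:ℝ)+2)*p) * m^p * ((2:ℝ≥0∞)^(((k:ℝ)-1)*(-q)) * m^(-q) *
              (Y * ∑' j : ℤ, (if cond k j then
                ((2:ℝ≥0∞)^(u k j)) ^ (-|q-1|) * (2^((j:ℝ)*q) * m^q * σ j) else 0)))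
              = Y * (((2:ℝ≥0∞)^(((k:ℝ)+2)*p) * m^p * ((2:ℝ≥0∞)^(((k:ℝ)-1)*(-q)) * m^(-q))) *
                ∑' j : ℤ, (if cond k j then
                  ((2:ℝ≥0∞)^(u k j)) ^ (-|q-1|) * (2^((j:ℝ)*q) * m^q * σ j) else 0)) := by
            ring
          rw [hshuffle]
          congr 1
          calc ((2:ℝ≥0∞)^(((k:ℝ)+2)*p) * m^p * ((2:ℝ≥0∞)^(((k:ℝ)-1)*(-q)) * m^(-q))) *
              ∑' j : ℤ, (if cond k j then
                ((2:ℝ≥0∞)^(u k j)) ^ (-|q-1|) * (2^((j:ℝ)*q) * m^q * σ j) else 0)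
              = ∑' j : ℤ, ((2:ℝ≥0∞)^(((k:ℝ)+2)*p) * m^p *
                  ((2:ℝ≥0∞)^(((k:ℝ)-1)*(-q)) * m^(-q))) *
                (if cond k j then ((2:ℝ≥0∞)^(u k j)) ^ (-|q-1|) *
                  (2^((j:ℝ)*q) * m^q * σ j) else 0) := ENNReal.tsum_mul_left.symm
            _ = ∑' j : ℤ, (2:ℝ≥0∞)^(2*p+q) * m^p *
                (if cond k j then (2:ℝ≥0∞)^(-δ*(ι2 j k : ℝ)) * B j else 0) :=
              tsum_congr hcollapse
            _ = (2:ℝ≥0∞)^(2*p+q) * m^p * T k := ENNReal.tsum_mul_left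
  calc ∑' k : ℤ, (2:ℝ≥0∞)^(((k:ℝ)+2)*p) * m^p *
      μ {x | (2:ℝ≥0∞)^((k:ℝ)-1) * m < ∑' j, (if cond k j then a j x else 0)}
      ≤ ∑' k : ℤ, Y * ((2:ℝ≥0∞)^(2*p+q) * m^p * T k) := ENNReal.tsum_le_tsum hk
    _ = Y * ((2:ℝ≥0∞)^(2*p+q) * m^p * ∑' k : ℤ, T k) := by
        rw [ENNReal.tsum_mul_left, ENNReal.tsum_mul_left]
    _ ≤ Y * ((2:ℝ≥0∞)^(2*p+q) * m^p * ((1-2^(-δ))⁻¹ * ∑' j : ℤ, B j)) := by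
        refine mul_le_mul_right (mul_le_mul_right ?_ _) _
        have hswap : ∑' k : ℤ, T k = ∑' j : ℤ, ∑' k : ℤ,
            (if cond k j then (2:ℝ≥0∞)^(-δ*(ι2 j k : ℝ)) * B j else 0) := by
          rw [hTdef]; exact ENNReal.tsum_comm
        rw [hswap]
        calc ∑' j : ℤ, ∑' k : ℤ, (if cond k j then (2:ℝ≥0∞)^(-δ*(ι2 j k : ℝ)) * B j else 0)
            = ∑' j : ℤ, (∑' k : ℤ, (if cond k j then (2:ℝ≥0∞)^(-δ*(ι2 j k : ℝ)) else 0)) * B j := by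
              refine tsum_congr (fun j => ?_)
              rw [← ENNReal.tsum_mul_right]
              refine tsum_congr (fun k => ?_)
              by_cases hc : cond k j
              · rw [if_pos hc, if_pos hc]
              · rw [if_neg hc, if_neg hc, zero_mul]
          _ ≤ ∑' j : ℤ, (1-2^(-δ))⁻¹ * B j := by
              refine ENNReal.tsum_le_tsum (fun j => ?_)
              refine mul_le_mul_left ?_ _
              exact geom_le hδ (fun k => cond k j) _ (ι2 j) (hι2 j) (fun k hc => le_rfl)
          _ = (1-2^(-δ))⁻¹ * ∑' j : ℤ, B j := ENNReal.tsum_mul_left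
    _ = (2^(2*p+q) * Y * (1-2^(-δ))⁻¹) * (m^p * ∑' j : ℤ, B j) := by ring



theorem core (p₀ p₁ p : ℝ) (h00 : 0 < p₀) (h01 : p₀ < p₁) (hp0 : p₀ < p) (hp1 : p < p₁) :
    ∃ K : ℝ≥0∞, K ≠ ⊤ ∧ ∀ (Ω : Type) (_ : MeasurableSpace Ω) (μ : Measure Ω)
      (a : ℤ → Ω → ℝ≥0∞) (σ : ℤ → ℝ≥0∞) (m : ℝ≥0∞),
      (∀ j, Measurable (a j)) → m ≠ 0 → m ≠ ⊤ →
      (∀ j : ℤ, ∫⁻ x, (a j x) ^ p₀ ∂μ ≤ 2^((j:ℝ)*p₀) * m^p₀ * σ j) →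
      (∀ j : ℤ, ∫⁻ x, (a j x) ^ p₁ ∂μ ≤ 2^((j:ℝ)*p₁) * m^p₁ * σ j) →
      ∫⁻ x, (∑' j : ℤ, a j x) ^ p ∂μ ≤ K * (m^p * ∑' j : ℤ, 2^((j:ℝ)*p) * σ j) := by
  have hp : 0 < p := h00.trans hp0
  have hp₁ : 0 < p₁ := h00.trans h01
  set ε₁ := (p₁ - p)/(p₁+1) with hε₁def
  set ε₀ := (p - p₀)/(p₀+1) with hε₀def
  have hε₁ : 0 < ε₁ := div_pos (by linarith) (by linarith)
  have hε₀ : 0 < ε₀ := div_pos (by linarith) (by linarith)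
  set δ₁ := (p₁ - p) - ε₁*|p₁-1| with hδ₁def
  set δ₀ := (p - p₀) - ε₀*|p₀-1| with hδ₀def
  have hδ₁pos : 0 < δ₁ := by
    have habs : |p₁-1| < p₁+1 := abs_lt.2 ⟨by linarith, by linarith⟩
    have h1 : ε₁*|p₁-1| < ε₁*(p₁+1) := mul_lt_mul_of_pos_left habs hε₁
    have h2 : ε₁*(p₁+1) = p₁ - p := by rw [hε₁def]; field_simp
    rw [hδ₁def]; linarith
  have hδ₀pos : 0 < δ₀ := by
    have habs : |p₀-1| < p₀+1 := abs_lt.2 ⟨by linarith, by linarith⟩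
    have h1 : ε₀*|p₀-1| < ε₀*(p₀+1) := mul_lt_mul_of_pos_left habs hε₀
    have h2 : ε₀*(p₀+1) = p - p₀ := by rw [hε₀def]; field_simp
    rw [hδ₀def]; linarith
  refine ⟨(2^(2*p+p₁) * (1+(1-2^(-ε₁))⁻¹)^p₁ * (1-2^(-δ₁))⁻¹)
      + (2^(2*p+p₀) * (1+(1-2^(-ε₀))⁻¹)^p₀ * (1-2^(-δ₀))⁻¹), ?_, ?_⟩
  · refine ENNReal.add_ne_top.2 ⟨?_, ?_⟩
    · refine ENNReal.mul_ne_top (ENNReal.mul_ne_top (two_rpow_ne_top _) ?_) (geom_ne_top hδ₁pos)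
      exact ENNReal.rpow_ne_top_of_nonneg hp₁.le
        (ENNReal.add_ne_top.2 ⟨one_ne_top, geom_ne_top hε₁⟩)
    · refine ENNReal.mul_ne_top (ENNReal.mul_ne_top (two_rpow_ne_top _) ?_) (geom_ne_top hδ₀pos)
      exact ENNReal.rpow_ne_top_of_nonneg h00.le
        (ENNReal.add_ne_top.2 ⟨one_ne_top, geom_ne_top hε₀⟩)
  · intro Ω inst μ a σ m ha hm0 hmt hyp0 hyp1
    set G := fun x => ∑' j : ℤ, a j x with hGdef
    have hGm : Measurable G := Measurable.ennreal_tsum ha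
    have hcast : ∀ k j : ℤ, j ≤ k → ((k-j).toNat : ℝ) = (k:ℝ) - (j:ℝ) := by
      intro k j h
      have h1 : ((k-j).toNat : ℤ) = k - j := Int.toNat_of_nonneg (by omega)
      calc ((k-j).toNat : ℝ) = (((k-j).toNat : ℤ) : ℝ) := by push_cast; ring
        _ = ((k - j : ℤ) : ℝ) := by rw [h1]
        _ = (k:ℝ) - (j:ℝ) := by push_cast; ring
    have hsplit : ∀ (k : ℤ) (x : Ω), G x =
        (∑' j, @ite ℝ≥0∞ (j ≤ k) (Classical.propDecidable _) (a j x) 0) + (∑' j, @ite ℝ≥0∞ (k < j) (Classical.propDecidable _) (a j x) 0) := by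
      intro k x
      rw [hGdef, ← ENNReal.tsum_add]
      refine tsum_congr fun j => ?_
      by_cases h : j ≤ k
      · rw [if_pos h, if_neg (not_lt.2 h), add_zero]
      · rw [if_neg h, if_pos (not_le.1 h), zero_add]
    have hsub : ∀ k : ℤ, {x | (2:ℝ≥0∞)^(k:ℝ) * m < G x} ⊆
        {x | (2:ℝ≥0∞)^((k:ℝ)-1) * m < ∑' j, @ite ℝ≥0∞ (j ≤ k) (Classical.propDecidable _) (a j x) 0} ∪
        {x | (2:ℝ≥0∞)^((k:ℝ)-1) * m < ∑' j, @ite ℝ≥0∞ (k < j) (Classical.propDecidable _) (a j x) 0} := by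
      intro k x hx
      by_contra hnot
      rw [Set.mem_union] at hnot
      push_neg at hnot
      obtain ⟨h1, h2⟩ := hnot
      simp only [Set.mem_setOf_eq, not_lt] at h1 h2
      have hle : G x ≤ (2:ℝ≥0∞)^(k:ℝ) * m := by
        rw [hsplit k x]
        calc (∑' j, @ite ℝ≥0∞ (j ≤ k) (Classical.propDecidable _) (a j x) 0) + (∑' j, @ite ℝ≥0∞ (k < j) (Classical.propDecidable _) (a j x) 0)
            ≤ (2:ℝ≥0∞)^((k:ℝ)-1)*m + (2:ℝ≥0∞)^((k:ℝ)-1)*m := add_le_add h1 h2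
          _ = (2:ℝ≥0∞)^(k:ℝ) * m := by
              rw [← two_mul, ← mul_assoc]
              congr 1
              have hk2 : (2:ℝ≥0∞)^(k:ℝ) = 2^(1 + ((k:ℝ)-1)) := by
                rw [show 1 + ((k:ℝ)-1) = (k:ℝ) by ring]
              rw [hk2, two_rpow_add, ENNReal.rpow_one]
      have hx' : (2:ℝ≥0∞)^(k:ℝ) * m < G x := hx
      exact absurd hx' (not_lt.2 hle)
    calc ∫⁻ x, G x ^ p ∂μ
        ≤ ∫⁻ x, ∑' k : ℤ,
            (if (2:ℝ≥0∞)^(k:ℝ)*m < G x then (2:ℝ≥0∞)^(((k:ℝ)+2)*p) * m^p else 0) ∂μ :=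
          lintegral_mono fun x => pointwise_dyadic hm0 hmt hp (G x)
      _ = ∑' k : ℤ, ∫⁻ x,
            (if (2:ℝ≥0∞)^(k:ℝ)*m < G x then (2:ℝ≥0∞)^(((k:ℝ)+2)*p) * m^p else 0) ∂μ :=
          lintegral_tsum fun k => (Measurable.ite
            (measurableSet_lt measurable_const hGm) measurable_const measurable_const).aemeasurable
      _ = ∑' k : ℤ, (2:ℝ≥0∞)^(((k:ℝ)+2)*p) * m^p * μ {x | (2:ℝ≥0∞)^(k:ℝ)*m < G x} :=
          tsum_congr fun k => lintegral_ite_lt μ hGm _ _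
      _ ≤ ∑' k : ℤ,
            ((2:ℝ≥0∞)^(((k:ℝ)+2)*p) * m^p *
              μ {x | (2:ℝ≥0∞)^((k:ℝ)-1)*m < ∑' j, @ite ℝ≥0∞ (j ≤ k) (Classical.propDecidable _) (a j x) 0}
            + (2:ℝ≥0∞)^(((k:ℝ)+2)*p) * m^p *
              μ {x | (2:ℝ≥0∞)^((k:ℝ)-1)*m < ∑' j, @ite ℝ≥0∞ (k < j) (Classical.propDecidable _) (a j x) 0}) := by
          refine ENNReal.tsum_le_tsum fun k => ?_
          rw [← mul_add]
          exact mul_le_mul_right (le_trans (measure_mono (hsub k)) (measure_union_le _ _)) _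
      _ = (∑' k : ℤ, (2:ℝ≥0∞)^(((k:ℝ)+2)*p) * m^p *
              μ {x | (2:ℝ≥0∞)^((k:ℝ)-1)*m < ∑' j, @ite ℝ≥0∞ (j ≤ k) (Classical.propDecidable _) (a j x) 0})
          + (∑' k : ℤ, (2:ℝ≥0∞)^(((k:ℝ)+2)*p) * m^p *
              μ {x | (2:ℝ≥0∞)^((k:ℝ)-1)*m < ∑' j, @ite ℝ≥0∞ (k < j) (Classical.propDecidable _) (a j x) 0}) :=
          ENNReal.tsum_add
      _ ≤ (2^(2*p+p₁) * (1+(1-2^(-ε₁))⁻¹)^p₁ * (1-2^(-δ₁))⁻¹) *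
            (m^p * ∑' j : ℤ, 2^((j:ℝ)*p) * σ j)
          + (2^(2*p+p₀) * (1+(1-2^(-ε₀))⁻¹)^p₀ * (1-2^(-δ₀))⁻¹) *
            (m^p * ∑' j : ℤ, 2^((j:ℝ)*p) * σ j) := by
          refine add_le_add ?_ ?_
          · refine half μ hp hp₁ hε₁ hδ₁pos (fun k j => j ≤ k)
              (fun k j => ε₁*((j:ℝ)-(k:ℝ))) ?_ (fun k j => (k-j).toNat) ?_ ?_
              (fun j k => (k-j).toNat) ?_ ?_ m hm0 hmt a ha σ hyp1
            · intro k j h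
              have : (j:ℝ) - k ≤ 0 := by
                have : (j:ℝ) ≤ k := by exact_mod_cast h
                linarith
              nlinarith [mul_nonneg hε₁.le (neg_nonneg.2 this)]
            · intro k i j hi hj hij; omega
            · intro k j h
              rw [hcast k j h]
              exact le_of_eq (by ring)
            · intro j k k' h h' hh; omega
            · intro k j h
              rw [hcast k j h, hδ₁def]
              ring
          · refine half μ hp h00 hε₀ hδ₀pos (fun k j => k < j)
              (fun k j => ε₀*((k:ℝ)-(j:ℝ))) ?_ (fun k j => (j-k).toNat) ?_ ?_
              (fun j k => (j-k).toNat) ?_ ?_ m hm0 hmt a ha σ hyp0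
            · intro k j h
              have : (k:ℝ) - j ≤ 0 := by
                have : (k:ℝ) ≤ j := by exact_mod_cast h.le
                linarith
              nlinarith [mul_nonneg hε₀.le (neg_nonneg.2 this)]
            · intro k i j hi hj hij; omega
            · intro k j h
              rw [hcast j k h.le]
              exact le_of_eq (by ring)
            · intro j k k' h h' hh; omega
            · intro k j h
              rw [hcast j k h.le, hδ₀def]
              ring
      _ = ((2^(2*p+p₁) * (1+(1-2^(-ε₁))⁻¹)^p₁ * (1-2^(-δ₁))⁻¹)
          + (2^(2*p+p₀) * (1+(1-2^(-ε₀))⁻¹)^p₀ * (1-2^(-δ₀))⁻¹)) *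
            (m^p * ∑' j : ℤ, 2^((j:ℝ)*p) * σ j) := (add_mul _ _ _).symm


lemma nnnorm_tsum_le_ennreal (F : ℤ → ℂ) :
    (‖∑' j, F j‖₊ : ℝ≥0∞) ≤ ∑' j, (‖F j‖₊ : ℝ≥0∞) := by
  rcases eq_top_or_lt_top (∑' j, (‖F j‖₊ : ℝ≥0∞)) with h | h
  · exact h ▸ le_top
  · have hs : Summable fun j => ‖F j‖₊ := by
      rw [← ENNReal.tsum_coe_ne_top_iff_summable]; exact h.ne
    calc (‖∑' j, F j‖₊ : ℝ≥0∞) ≤ ((∑' j, ‖F j‖₊ : ℝ≥0) : ℝ≥0∞) :=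
          ENNReal.coe_le_coe.2 (nnnorm_tsum_le hs)
      _ = ∑' j, (‖F j‖₊ : ℝ≥0∞) := ENNReal.coe_tsum hs


end DyadicInterp


theorem dyadic_interpolation (p₀ p₁ p : ℝ) (h0 : 0 < p₀) (h01 : p₀ < p₁)
    (hp0 : p₀ < p) (hp1 : p < p₁) :
    ∃ C : ℝ, 0 < C ∧
      ∀ (Ω : Type) (_ : MeasurableSpace Ω) (μ : Measure Ω) (F : ℤ → Ω → ℂ)
        (s : ℤ → ℝ) (M : ℝ),
        (∀ j, AEMeasurable (F j) μ) → (∀ j, 0 ≤ s j) → 0 < M →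
        (∀ j : ℤ, ∀ q ∈ ({p₀, p₁} : Set ℝ),
          eLpNorm (F j) (ENNReal.ofReal q) μ ^ q ≤
            ENNReal.ofReal ((2:ℝ) ^ ((j:ℝ) * q) * M ^ q * s j)) →
        eLpNorm (fun x => ∑' j : ℤ, F j x) (ENNReal.ofReal p) μ ^ p ≤
          ENNReal.ofReal (C ^ p * M ^ p) * ∑' j : ℤ, ENNReal.ofReal ((2:ℝ) ^ ((j:ℝ) * p) * s j) := by
  have hp : 0 < p := h0.trans hp0
  obtain ⟨K, hKt, hK⟩ := DyadicInterp.core p₀ p₁ p h0 h01 hp0 hp1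
  set C : ℝ := (K.toReal)^(1/p) + 1 with hCdef
  have hC : 0 < C := by positivity
  refine ⟨C, hC, ?_⟩
  intro Ω inst μ F s M hF hs hM hyp
  set a : ℤ → Ω → ℝ≥0∞ := fun j x => (‖F j x‖₊ : ℝ≥0∞) with hadef
  have haM : ∀ j, AEMeasurable (a j) μ := fun j => (hF j).enorm
  set b : ℤ → Ω → ℝ≥0∞ := fun j => (haM j).mk _ with hbdef
  have hbm : ∀ j, Measurable (b j) := fun j => (haM j).measurable_mk
  have hab : ∀ j, a j =ᵐ[μ] b j := fun j => (haM j).ae_eq_mk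
  set m : ℝ≥0∞ := ENNReal.ofReal M with hmdef
  have hm0 : m ≠ 0 := (ENNReal.ofReal_pos.2 hM).ne'
  have hmt : m ≠ ⊤ := ENNReal.ofReal_ne_top
  set σ : ℤ → ℝ≥0∞ := fun j => ENNReal.ofReal (s j) with hσdef
  have hyp' : ∀ (q : ℝ), 0 < q →
      (∀ j : ℤ, eLpNorm (F j) (ENNReal.ofReal q) μ ^ q ≤
        ENNReal.ofReal ((2:ℝ)^((j:ℝ)*q) * M^q * s j)) →
      ∀ j : ℤ, ∫⁻ x, (b j x)^q ∂μ ≤ 2^((j:ℝ)*q) * m^q * σ j := by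
    intro q hq hypq j
    have h1 : ∫⁻ x, (b j x)^q ∂μ = ∫⁻ x, (a j x)^q ∂μ :=
      lintegral_congr_ae ((hab j).symm.mono fun x hx => by simp only [hx])
    have h2 : eLpNorm (F j) (ENNReal.ofReal q) μ ^ q = ∫⁻ x, (a j x)^q ∂μ := by
      rw [eLpNorm_eq_lintegral_rpow_enorm_toReal (ENNReal.ofReal_pos.2 hq).ne' ENNReal.ofReal_ne_top,
        ENNReal.toReal_ofReal hq.le, ← ENNReal.rpow_mul, one_div,
        inv_mul_cancel₀ hq.ne', ENNReal.rpow_one]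
      rfl
    have h3 : ENNReal.ofReal ((2:ℝ)^((j:ℝ)*q) * M^q * s j) = 2^((j:ℝ)*q) * m^q * σ j := by
      rw [ENNReal.ofReal_mul (by positivity), ENNReal.ofReal_mul (by positivity),
        ← ENNReal.ofReal_rpow_of_pos (by norm_num : (0:ℝ) < 2),
        ← ENNReal.ofReal_rpow_of_pos hM]
      norm_num [hmdef, hσdef]
    calc ∫⁻ x, (b j x)^q ∂μ = ∫⁻ x, (a j x)^q ∂μ := h1
      _ = eLpNorm (F j) (ENNReal.ofReal q) μ ^ q := h2.symm
      _ ≤ ENNReal.ofReal ((2:ℝ)^((j:ℝ)*q) * M^q * s j) := hypq j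
      _ = 2^((j:ℝ)*q) * m^q * σ j := h3
  have hyp0' := hyp' p₀ h0 (fun j => hyp j p₀ (Set.mem_insert _ _))
  have hyp1' := hyp' p₁ (h0.trans h01) (fun j => hyp j p₁ (Set.mem_insert_of_mem _ rfl))
  have hmain := hK Ω inst μ b σ m hbm hm0 hmt hyp0' hyp1'
  have hL : eLpNorm (fun x => ∑' j : ℤ, F j x) (ENNReal.ofReal p) μ ^ p ≤
      ∫⁻ x, (∑' j : ℤ, b j x)^p ∂μ := by
    rw [eLpNorm_eq_lintegral_rpow_enorm_toReal (ENNReal.ofReal_pos.2 hp).ne' ENNReal.ofReal_ne_top,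
      ENNReal.toReal_ofReal hp.le, ← ENNReal.rpow_mul, one_div,
      inv_mul_cancel₀ hp.ne', ENNReal.rpow_one]
    have hstep : ∫⁻ x, (‖∑' j : ℤ, F j x‖₊ : ℝ≥0∞)^p ∂μ ≤ ∫⁻ x, (∑' j : ℤ, a j x)^p ∂μ :=
      lintegral_mono fun x =>
        ENNReal.rpow_le_rpow (DyadicInterp.nnnorm_tsum_le_ennreal (fun j => F j x)) hp.le
    refine le_trans hstep (le_of_eq (lintegral_congr_ae ?_))
    have hae : ∀ᵐ x ∂μ, ∀ j : ℤ, a j x = b j x := (ae_all_iff).2 hab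
    exact hae.mono fun x hx => by simp only [hx]
  have hterm : ∀ j : ℤ, ENNReal.ofReal ((2:ℝ)^((j:ℝ)*p) * s j) = 2^((j:ℝ)*p) * σ j := by
    intro j
    rw [ENNReal.ofReal_mul (by positivity),
      ← ENNReal.ofReal_rpow_of_pos (by norm_num : (0:ℝ) < 2)]
    norm_num [hσdef]
  have hKC : K ≤ ENNReal.ofReal (C^p) := by
    conv_lhs => rw [← ENNReal.ofReal_toReal hKt]
    apply ENNReal.ofReal_le_ofReal
    have h2 : K.toReal = (K.toReal^(1/p))^p := by
      rw [← Real.rpow_mul ENNReal.toReal_nonneg, one_div,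
        inv_mul_cancel₀ hp.ne', Real.rpow_one]
    rw [h2]
    refine Real.rpow_le_rpow (Real.rpow_nonneg ENNReal.toReal_nonneg _) ?_ hp.le
    rw [hCdef]; linarith
  have hMp : ENNReal.ofReal (M^p) = m^p := (ENNReal.ofReal_rpow_of_pos hM).symm
  have hR : K * (m^p * ∑' j : ℤ, 2^((j:ℝ)*p) * σ j) ≤
      ENNReal.ofReal (C^p * M^p) * ∑' j : ℤ, ENNReal.ofReal ((2:ℝ)^((j:ℝ)*p) * s j) := by
    rw [tsum_congr hterm, ENNReal.ofReal_mul (by positivity : (0:ℝ) ≤ C^p), hMp]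
    calc K * (m^p * ∑' j : ℤ, 2^((j:ℝ)*p) * σ j)
        = (K * (m^p * ∑' j : ℤ, 2^((j:ℝ)*p) * σ j)) := rfl
      _ ≤ ENNReal.ofReal (C^p) * (m^p * ∑' j : ℤ, 2^((j:ℝ)*p) * σ j) :=
          mul_le_mul_left hKC _
      _ = ENNReal.ofReal (C^p) * m^p * ∑' j : ℤ, 2^((j:ℝ)*p) * σ j := by ring
  exact le_trans hL (le_trans hmain hR)
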